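/- arXiv:math/0503235 — 10 statements merged into one kernel-verified Lean document; each statement's English description precedes it below -/
import Mathlib

section
/- (Lemma 1.) The operator D maps the set Q = { f : ℝ^d → ℝ : f ≤ h pointwise and A f ≥ f pointwise } into itself: if f ∈ Q then D f ∈ Q. -/
open Finset

/-- The weighted arithmetic average operator:
`(A f)(y) = ∑ k, α k * f (y - x k)`. -/
noncomputable def avgOp (d m : ℕ) (α : Fin m → ℝ) (x : Fin m → (Fin d → ℝ))
    (f : (Fin d → ℝ) → ℝ) : (Fin d → ℝ) → ℝ :=
  fun y => ∑ k, α k * f (y - x k)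

/-- The Bermudan iteration operator: `(D f)(y) = max (c * (A f)(y)) (g y)`. -/
noncomputable def bermOp (d m : ℕ) (α : Fin m → ℝ) (x : Fin m → (Fin d → ℝ))
    (c : ℝ) (g : (Fin d → ℝ) → ℝ) (f : (Fin d → ℝ) → ℝ) : (Fin d → ℝ) → ℝ :=
  fun y => max (c * avgOp d m α x f y) (g y)

lemma avgOp_mono (d m : ℕ) (α : Fin m → ℝ) (hα : ∀ k, 0 ≤ α k)
    (x : Fin m → (Fin d → ℝ)) {u v : (Fin d → ℝ) → ℝ} (huv : ∀ y, u y ≤ v y) :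
    ∀ y, avgOp d m α x u y ≤ avgOp d m α x v y := by
  intro y
  exact Finset.sum_le_sum fun k _ => mul_le_mul_of_nonneg_left (huv _) (hα k)

/-- Lemma 1: `D` maps `Q = {f : f ≤ h and A f ≥ f}` into itself. -/
theorem bermOp_maps_Q (d m : ℕ) (hm : 1 ≤ m)
    (α : Fin m → ℝ) (hα : ∀ k, α k ∈ Set.Icc (0:ℝ) 1) (hsum : ∑ k, α k = 1)
    (x : Fin m → (Fin d → ℝ))
    (c : ℝ) (hc : c ∈ Set.Ioo (0:ℝ) 1)
    (g h : (Fin d → ℝ) → ℝ)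
    (hg : ∀ y, g y ≤ avgOp d m α x g y)
    (hh : ∀ y, avgOp d m α x h y = h y)
    (hgh : ∀ y, max 0 (g y) ≤ h y)
    (f : (Fin d → ℝ) → ℝ)
    (hfQ : (∀ y, f y ≤ h y) ∧ (∀ y, f y ≤ avgOp d m α x f y)) :
    (∀ y, bermOp d m α x c g f y ≤ h y) ∧
      (∀ y, bermOp d m α x c g f y ≤ avgOp d m α x (bermOp d m α x c g f) y) := by
  obtain ⟨hfh, hfA⟩ := hfQ
  have hα0 : ∀ k, 0 ≤ α k := fun k => (hα k).1
  have hh0 : ∀ y, 0 ≤ h y := fun y => le_trans (le_max_left _ _) (hgh y)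
  have hghy : ∀ y, g y ≤ h y := fun y => le_trans (le_max_right _ _) (hgh y)
  constructor
  · intro y
    apply max_le _ (hghy y)
    calc c * avgOp d m α x f y ≤ c * avgOp d m α x h y := by
          exact mul_le_mul_of_nonneg_left (avgOp_mono d m α hα0 x hfh y) hc.1.le
      _ = c * h y := by rw [hh]
      _ ≤ 1 * h y := mul_le_mul_of_nonneg_right hc.2.le (hh0 y)
      _ = h y := one_mul _
  · intro y
    apply max_le
    · calc c * avgOp d m α x f y
          ≤ c * avgOp d m α x (avgOp d m α x f) y := by
            exact mul_le_mul_of_nonneg_left (avgOp_mono d m α hα0 x hfA y) hc.1.le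
        _ = avgOp d m α x (fun z => c * avgOp d m α x f z) y := by
            simp only [avgOp, Finset.mul_sum]
            refine Finset.sum_congr rfl fun k _ => ?_
            refine Finset.sum_congr rfl fun j _ => ?_
            ring
        _ ≤ avgOp d m α x (bermOp d m α x c g f) y := by
            apply avgOp_mono d m α hα0 x
            intro z; exact le_max_left _ _
    · calc g y ≤ avgOp d m α x g y := hg y
        _ ≤ avgOp d m α x (bermOp d m α x c g f) y := by
            apply avgOp_mono d m α hα0 x
            intro z; exact le_max_right _ _
end

section
/- (Theorem 2, uniform boundedness.) For all n ∈ ℕ₀ and all y ∈ ℝ^d, q_n(y) ≤ h(y), where q_n = D^n(max(g, 0)). -/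
open Finset

/-- Theorem 2, uniform boundedness: `q_n ≤ h` pointwise. -/
theorem q_le_h (d m : ℕ) (hm : 1 ≤ m)
    (α : Fin m → ℝ) (hα : ∀ k, α k ∈ Set.Icc (0:ℝ) 1) (hsum : ∑ k, α k = 1)
    (x : Fin m → (Fin d → ℝ))
    (c : ℝ) (hc : c ∈ Set.Ioo (0:ℝ) 1)
    (g h : (Fin d → ℝ) → ℝ)
    (hg : ∀ y, g y ≤ avgOp d m α x g y)
    (hh : ∀ y, avgOp d m α x h y = h y)
    (hgh : ∀ y, max 0 (g y) ≤ h y)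
    (q : ℕ → (Fin d → ℝ) → ℝ)
    (hq : ∀ n, q n = (bermOp d m α x c g)^[n] (fun y => max (g y) 0)) :
    ∀ n : ℕ, ∀ y, q n y ≤ h y := by
  have h0 : ∀ y, (0:ℝ) ≤ h y := fun y => le_trans (le_max_left _ _) (hgh y)
  intro n
  induction n with
  | zero =>
      intro y
      rw [hq 0]
      simpa [max_comm] using hgh y
  | succ n ih =>
      intro y
      have hiter : q (n+1) y = bermOp d m α x c g (q n) y := by
        rw [hq (n+1), Function.iterate_succ_apply']
        rw [hq n]
      rw [hiter, bermOp]
      apply max_le _ (le_trans (le_trans (le_max_right 0 _) (hgh y)) le_rfl)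
      have hA : avgOp d m α x (q n) y ≤ avgOp d m α x h y := by
        apply Finset.sum_le_sum
        intro k _
        exact mul_le_mul_of_nonneg_left (ih _) (hα k).1
      calc c * avgOp d m α x (q n) y ≤ c * avgOp d m α x h y :=
            mul_le_mul_of_nonneg_left hA (le_of_lt hc.1)
        _ = c * h y := by rw [hh y]
        _ ≤ 1 * h y := mul_le_mul_of_nonneg_right (le_of_lt hc.2) (h0 y)
        _ = h y := one_mul _
end

section
/- (Theorem 2, part of.) The pointwise supremum q(y) := sup_{n ∈ ℕ₀} q_n(y) (which is finite since 0 ≤ q_n(y) ≤ h(y) for all n) satisfies q ≤ h pointwise and A q ≥ q pointwise; that is, q belongs to Q = { f : f ≤ h pointwise and A f ≥ f pointwise }. -/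
open Finset

/-- Theorem 2, part of: the pointwise supremum
`q(y) = ⨆ n, q_n(y)` satisfies `q ≤ h` and `A q ≥ q` pointwise, i.e. `q ∈ Q`. -/
theorem qsup_mem_Q (d m : ℕ) (hm : 1 ≤ m)
    (α : Fin m → ℝ) (hα : ∀ k, α k ∈ Set.Icc (0:ℝ) 1) (hsum : ∑ k, α k = 1)
    (x : Fin m → (Fin d → ℝ))
    (c : ℝ) (hc : c ∈ Set.Ioo (0:ℝ) 1)
    (g h : (Fin d → ℝ) → ℝ)
    (hg : ∀ y, g y ≤ avgOp d m α x g y)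
    (hh : ∀ y, avgOp d m α x h y = h y)
    (hgh : ∀ y, max 0 (g y) ≤ h y)
    (q : ℕ → (Fin d → ℝ) → ℝ)
    (hq : ∀ n, q n = (bermOp d m α x c g)^[n] (fun y => max (g y) 0))
    (qsup : (Fin d → ℝ) → ℝ) (hqsup : ∀ y, qsup y = ⨆ n : ℕ, q n y) :
    (∀ y, qsup y ≤ h y) ∧ (∀ y, qsup y ≤ avgOp d m α x qsup y) := by
  obtain ⟨hc0, hc1⟩ := hc
  have hα0 : ∀ k, 0 ≤ α k := fun k => (hα k).1
  have hmono : ∀ f f' : (Fin d → ℝ) → ℝ, (∀ y, f y ≤ f' y) →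
      ∀ y, avgOp d m α x f y ≤ avgOp d m α x f' y := by
    intro f f' hff y
    exact Finset.sum_le_sum fun k _ => mul_le_mul_of_nonneg_left (hff _) (hα0 k)
  have hh0 : ∀ y, 0 ≤ h y := fun y => le_trans (le_max_left 0 (g y)) (hgh y)
  have hgh' : ∀ y, g y ≤ h y := fun y => le_trans (le_max_right 0 (g y)) (hgh y)
  have hsucc : ∀ n, q (n + 1) = bermOp d m α x c g (q n) := by
    intro n
    rw [hq (n + 1), hq n, Function.iterate_succ_apply']
  have hqh : ∀ n y, q n y ≤ h y := by
    intro n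
    induction n with
    | zero =>
      intro y
      rw [hq 0]
      simpa [max_comm] using hgh y
    | succ n ih =>
      intro y
      rw [hsucc n]
      refine max_le ?_ (hgh' y)
      calc c * avgOp d m α x (q n) y ≤ c * avgOp d m α x h y :=
            mul_le_mul_of_nonneg_left (hmono _ _ ih y) hc0.le
        _ = c * h y := by rw [hh y]
        _ ≤ 1 * h y := mul_le_mul_of_nonneg_right hc1.le (hh0 y)
        _ = h y := one_mul _
  have hbdd : ∀ y, BddAbove (Set.range fun n => q n y) := by
    intro y
    exact ⟨h y, by rintro _ ⟨n, rfl⟩; exact hqh n y⟩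
  have hle_sup : ∀ n y, q n y ≤ qsup y := by
    intro n y
    rw [hqsup y]
    exact le_ciSup (hbdd y) n
  have hq0 : ∀ y, 0 ≤ q 0 y := by
    intro y; rw [hq 0]; exact le_max_right _ _
  have hqsup0 : ∀ y, 0 ≤ qsup y := fun y => le_trans (hq0 y) (hle_sup 0 y)
  have hAq0 : ∀ y, 0 ≤ avgOp d m α x qsup y := by
    intro y
    exact Finset.sum_nonneg fun k _ => mul_nonneg (hα0 k) (hqsup0 _)
  have hgsup : ∀ y, g y ≤ qsup y := by
    intro y
    refine le_trans ?_ (hle_sup 0 y)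
    rw [hq 0]; exact le_max_left _ _
  have hgA : ∀ y, g y ≤ avgOp d m α x qsup y :=
    fun y => le_trans (hg y) (hmono _ _ hgsup y)
  have key : ∀ n y, q n y ≤ avgOp d m α x qsup y := by
    intro n
    induction n with
    | zero =>
      intro y
      rw [hq 0]
      exact max_le (hgA y) (hAq0 y)
    | succ n ih =>
      intro y
      rw [hsucc n]
      refine max_le ?_ (hgA y)
      calc c * avgOp d m α x (q n) y ≤ c * avgOp d m α x qsup y :=
            mul_le_mul_of_nonneg_left (hmono _ _ (hle_sup n) y) hc0.le
        _ ≤ 1 * avgOp d m α x qsup y :=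
            mul_le_mul_of_nonneg_right hc1.le (hAq0 y)
        _ = _ := one_mul _
  constructor
  · intro y
    rw [hqsup y]
    exact ciSup_le fun n => hqh n y
  · intro y
    rw [hqsup y]
    exact ciSup_le fun n => key n y
end

section
/- (Theorem 2, fixed-point property.) The function q(y) := sup_{n ∈ ℕ₀} q_n(y) is a fixed point of D: for all y ∈ ℝ^d, (D q)(y) = q(y). -/
open Finset

/-- Theorem 2, fixed-point property: `q = ⨆ n, q_n` is a fixed
point of `D`. -/
theorem qsup_fixed_point (d m : ℕ) (hm : 1 ≤ m)
    (α : Fin m → ℝ) (hα : ∀ k, α k ∈ Set.Icc (0:ℝ) 1) (hsum : ∑ k, α k = 1)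
    (x : Fin m → (Fin d → ℝ))
    (c : ℝ) (hc : c ∈ Set.Ioo (0:ℝ) 1)
    (g h : (Fin d → ℝ) → ℝ)
    (hg : ∀ y, g y ≤ avgOp d m α x g y)
    (hh : ∀ y, avgOp d m α x h y = h y)
    (hgh : ∀ y, max 0 (g y) ≤ h y)
    (q : ℕ → (Fin d → ℝ) → ℝ)
    (hq : ∀ n, q n = (bermOp d m α x c g)^[n] (fun y => max (g y) 0))
    (qsup : (Fin d → ℝ) → ℝ) (hqsup : ∀ y, qsup y = ⨆ n : ℕ, q n y) :
    ∀ y, bermOp d m α x c g qsup y = qsup y := by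
  obtain ⟨hc0, hc1⟩ := hc
  -- recursion
  have hrec : ∀ n, q (n + 1) = bermOp d m α x c g (q n) := by
    intro n
    rw [hq, hq, Function.iterate_succ_apply']
  -- monotonicity of D
  have hDmono : ∀ f f' : (Fin d → ℝ) → ℝ, (∀ z, f z ≤ f' z) →
      ∀ y, bermOp d m α x c g f y ≤ bermOp d m α x c g f' y := by
    intro f f' hle y
    refine max_le_max ?_ le_rfl
    refine mul_le_mul_of_nonneg_left ?_ hc0.le
    exact Finset.sum_le_sum fun k _ =>
      mul_le_mul_of_nonneg_left (hle _) (hα k).1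
  -- q monotone in n
  have hmono : ∀ n z, q n z ≤ q (n + 1) z := by
    intro n
    induction n with
    | zero =>
      intro z
      rw [hrec 0, hq 0]
      simp only [Function.iterate_zero, id]
      refine max_le ?_ ?_
      · exact le_max_of_le_right le_rfl
      · refine le_max_of_le_left ?_
        refine mul_nonneg hc0.le (Finset.sum_nonneg fun k _ =>
          mul_nonneg (hα k).1 (le_max_right _ _))
    | succ n ih =>
      intro z
      rw [hrec n, hrec (n + 1)]
      exact hDmono _ _ ih z
  have hmono' : ∀ z, Monotone fun n => q n z := fun z =>
    monotone_nat_of_le_succ fun n => hmono n z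
  -- h is nonnegative
  have hh0 : ∀ z, 0 ≤ h z := fun z => le_trans (le_max_left _ _) (hgh z)
  -- q n ≤ h
  have hub : ∀ n z, q n z ≤ h z := by
    intro n
    induction n with
    | zero =>
      intro z
      rw [hq 0]
      simpa [max_comm] using hgh z
    | succ n ih =>
      intro z
      rw [hrec n]
      refine max_le ?_ (le_trans (le_max_right 0 _) (hgh z))
      calc c * avgOp d m α x (q n) z ≤ c * avgOp d m α x h z := by
            refine mul_le_mul_of_nonneg_left ?_ hc0.le
            exact Finset.sum_le_sum fun k _ =>
              mul_le_mul_of_nonneg_left (ih _) (hα k).1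
        _ = c * h z := by rw [hh]
        _ ≤ 1 * h z := mul_le_mul_of_nonneg_right hc1.le (hh0 z)
        _ = h z := one_mul _
  -- convergence to qsup
  have htend : ∀ z, Filter.Tendsto (fun n => q n z) Filter.atTop (nhds (qsup z)) := by
    intro z
    rw [hqsup]
    exact tendsto_atTop_ciSup (hmono' z)
      ⟨h z, fun v ⟨n, hn⟩ => hn ▸ hub n z⟩
  intro y
  -- D (q n) y = q (n+1) y tends to D qsup y
  have h1 : Filter.Tendsto (fun n => q (n + 1) y) Filter.atTop
      (nhds (bermOp d m α x c g qsup y)) := by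
    have : Filter.Tendsto (fun n => bermOp d m α x c g (q n) y) Filter.atTop
        (nhds (bermOp d m α x c g qsup y)) := by
      unfold bermOp avgOp
      refine Filter.Tendsto.max ?_ tendsto_const_nhds
      refine Filter.Tendsto.const_mul c ?_
      exact tendsto_finset_sum _ fun k _ =>
        Filter.Tendsto.const_mul (α k) (htend (y - x k))
    simpa only [hrec] using this
  have h2 : Filter.Tendsto (fun n => q (n + 1) y) Filter.atTop (nhds (qsup y)) :=
    (htend y).comp (Filter.tendsto_add_atTop_nat 1)
  exact tendsto_nhds_unique h1 h2
end

section
/- (Theorem 2, minimality.) The function q(y) := sup_{n ∈ ℕ₀} q_n(y) is the smallest nonnegative fixed point of D: every function p : ℝ^d → ℝ with p ≥ 0 pointwise and D p = p satisfies q ≤ p pointwise. -/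
open Finset

/-- Theorem 2, minimality: `q = ⨆ n, q_n` is the smallest
nonnegative fixed point of `D`. -/
theorem qsup_smallest_fixed_point (d m : ℕ) (hm : 1 ≤ m)
    (α : Fin m → ℝ) (hα : ∀ k, α k ∈ Set.Icc (0:ℝ) 1) (hsum : ∑ k, α k = 1)
    (x : Fin m → (Fin d → ℝ))
    (c : ℝ) (hc : c ∈ Set.Ioo (0:ℝ) 1)
    (g h : (Fin d → ℝ) → ℝ)
    (hg : ∀ y, g y ≤ avgOp d m α x g y)
    (hh : ∀ y, avgOp d m α x h y = h y)
    (hgh : ∀ y, max 0 (g y) ≤ h y)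
    (q : ℕ → (Fin d → ℝ) → ℝ)
    (hq : ∀ n, q n = (bermOp d m α x c g)^[n] (fun y => max (g y) 0))
    (qsup : (Fin d → ℝ) → ℝ) (hqsup : ∀ y, qsup y = ⨆ n : ℕ, q n y)
    (p : (Fin d → ℝ) → ℝ) (hp0 : ∀ y, 0 ≤ p y)
    (hpfix : ∀ y, bermOp d m α x c g p y = p y) :
    ∀ y, qsup y ≤ p y := by
  have hmono : ∀ f₁ f₂ : (Fin d → ℝ) → ℝ, (∀ y, f₁ y ≤ f₂ y) →
      ∀ y, bermOp d m α x c g f₁ y ≤ bermOp d m α x c g f₂ y := by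
    intro f₁ f₂ hle y
    have hA : avgOp d m α x f₁ y ≤ avgOp d m α x f₂ y := by
      apply Finset.sum_le_sum
      intro k _
      exact mul_le_mul_of_nonneg_left (hle _) (hα k).1
    exact max_le_max (mul_le_mul_of_nonneg_left hA hc.1.le) le_rfl
  have hbase : ∀ y, max (g y) 0 ≤ p y := by
    intro y
    have : g y ≤ p y := (hpfix y) ▸ le_max_right _ _
    exact max_le this (hp0 y)
  have hstep : ∀ n y, (bermOp d m α x c g)^[n] (fun y => max (g y) 0) y ≤ p y := by
    intro n
    induction n with
    | zero => exact hbase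
    | succ n ih =>
      intro y
      rw [Function.iterate_succ_apply']
      calc bermOp d m α x c g ((bermOp d m α x c g)^[n] fun y => max (g y) 0) y
          ≤ bermOp d m α x c g p y := hmono _ _ ih y
        _ = p y := hpfix y
  intro y
  rw [hqsup]
  apply ciSup_le
  intro n
  rw [hq]
  exact hstep n y
end

section
/- (Lemma 3.) For all x ∈ ℝ^d and n ∈ ℕ₀, if q_{n+1}(x) = g(x), then q_n(x) = g(x), where q_n = D^n(max(g, 0)). -/
open Finset

/-- Lemma 3: if `q_{n+1}(x) = g(x)` then `q_n(x) = g(x)`. -/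
theorem q_eq_g_of_succ_eq_g (d m : ℕ) (hm : 1 ≤ m)
    (α : Fin m → ℝ) (hα : ∀ k, α k ∈ Set.Icc (0:ℝ) 1) (hsum : ∑ k, α k = 1)
    (x : Fin m → (Fin d → ℝ))
    (c : ℝ) (hc : c ∈ Set.Ioo (0:ℝ) 1)
    (g h : (Fin d → ℝ) → ℝ)
    (hg : ∀ y, g y ≤ avgOp d m α x g y)
    (hh : ∀ y, avgOp d m α x h y = h y)
    (hgh : ∀ y, max 0 (g y) ≤ h y)
    (q : ℕ → (Fin d → ℝ) → ℝ)
    (hq : ∀ n, q n = (bermOp d m α x c g)^[n] (fun y => max (g y) 0)) :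
    ∀ (z : Fin d → ℝ) (n : ℕ), q (n + 1) z = g z → q n z = g z := by
  obtain ⟨hc0, hc1⟩ := hc
  have hAmono : ∀ f f' : (Fin d → ℝ) → ℝ, (∀ y, f y ≤ f' y) →
      ∀ y, avgOp d m α x f y ≤ avgOp d m α x f' y := by
    intro f f' hff y
    exact Finset.sum_le_sum fun k _ => mul_le_mul_of_nonneg_left (hff _) (hα k).1
  have hAnn : ∀ f : (Fin d → ℝ) → ℝ, (∀ y, 0 ≤ f y) → ∀ y, 0 ≤ avgOp d m α x f y := by
    intro f hf y
    exact Finset.sum_nonneg fun k _ => mul_nonneg (hα k).1 (hf _)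
  have hq0 : ∀ y, 0 ≤ q 0 y := by
    intro y; rw [hq]; exact le_max_right _ _
  have hqs : ∀ n y, q (n+1) y = max (c * avgOp d m α x (q n) y) (g y) := by
    intro n y
    rw [hq (n+1), Function.iterate_succ_apply', ← hq n]
    rfl
  have hmono : ∀ n y, q n y ≤ q (n+1) y := by
    intro n
    induction n with
    | zero =>
      intro y
      have hnn : (0:ℝ) ≤ c * avgOp d m α x (q 0) y :=
        mul_nonneg hc0.le (hAnn _ hq0 y)
      have h0 : q 0 y = max (g y) 0 := by rw [hq 0]; rfl
      rw [hqs 0 y, h0]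
      exact max_le (le_max_right _ _) (le_trans hnn (le_max_left _ _))
    | succ n ih =>
      intro y
      rw [hqs n y, hqs (n+1) y]
      exact max_le_max (mul_le_mul_of_nonneg_left (hAmono _ _ ih y) hc0.le) le_rfl
  intro z n hn
  cases n with
  | zero =>
    have hle : c * avgOp d m α x (q 0) z ≤ g z := by
      rw [hqs 0 z] at hn
      calc c * avgOp d m α x (q 0) z ≤ max (c * avgOp d m α x (q 0) z) (g z) := le_max_left _ _
        _ = g z := hn
    have : (0:ℝ) ≤ g z := le_trans (mul_nonneg hc0.le (hAnn _ hq0 z)) hle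
    rw [hq 0]
    exact max_eq_left this
  | succ n =>
    have hle : c * avgOp d m α x (q (n+1)) z ≤ g z := by
      rw [hqs (n+1) z] at hn
      calc c * avgOp d m α x (q (n+1)) z
          ≤ max (c * avgOp d m α x (q (n+1)) z) (g z) := le_max_left _ _
        _ = g z := hn
    have hle' : c * avgOp d m α x (q n) z ≤ g z :=
      le_trans (mul_le_mul_of_nonneg_left (hAmono _ _ (hmono n) z) hc0.le) hle
    rw [hqs n z]
    exact max_eq_right hle'
end

section
/- (Theorem 4.) Assume in addition that h is bounded above by a constant M ≥ 0. Then for all n ∈ ℕ ≥ 1, sup_{y ∈ ℝ^d} |q_{n+1}(y) − q_n(y)| ≤ c · sup_{y ∈ ℝ^d} |q_n(y) − q_{n-1}(y)|, where q_n = D^n(max(g, 0)). (All suprema are finite since 0 ≤ q_n ≤ h ≤ M pointwise.) -/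
open Finset

/-- Theorem 4: the successive differences contract with factor `c`:
`‖q_{n+1} - q_n‖_∞ ≤ c * ‖q_n - q_{n-1}‖_∞` for `n ≥ 1`. -/
theorem q_diff_contraction (d m : ℕ) (hm : 1 ≤ m)
    (α : Fin m → ℝ) (hα : ∀ k, α k ∈ Set.Icc (0:ℝ) 1) (hsum : ∑ k, α k = 1)
    (x : Fin m → (Fin d → ℝ))
    (c : ℝ) (hc : c ∈ Set.Ioo (0:ℝ) 1)
    (g h : (Fin d → ℝ) → ℝ)
    (hg : ∀ y, g y ≤ avgOp d m α x g y)
    (hh : ∀ y, avgOp d m α x h y = h y)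
    (hgh : ∀ y, max 0 (g y) ≤ h y)
    (M : ℝ) (hM : 0 ≤ M) (hhM : ∀ y, h y ≤ M)
    (q : ℕ → (Fin d → ℝ) → ℝ)
    (hq : ∀ n, q n = (bermOp d m α x c g)^[n] (fun y => max (g y) 0)) :
    ∀ n : ℕ, 1 ≤ n →
      (⨆ y, |q (n + 1) y - q n y|) ≤ c * ⨆ y, |q n y - q (n - 1) y| := by
  have hα0 : ∀ k, 0 ≤ α k := fun k => (hα k).1
  obtain ⟨hc0, hc1⟩ := hc
  -- successor recursion
  have hiter : ∀ k, q (k + 1) = bermOp d m α x c g (q k) := by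
    intro k
    rw [hq, hq, Function.iterate_succ_apply']
  -- bounds 0 ≤ q n ≤ h
  have hbound : ∀ n y, 0 ≤ q n y ∧ q n y ≤ h y := by
    intro n
    induction n with
    | zero =>
      intro y
      rw [hq]
      constructor
      · exact le_max_right _ _
      · simpa [max_comm] using hgh y
    | succ k ih =>
      intro y
      rw [hiter]
      constructor
      · refine le_trans ?_ (le_max_left _ _)
        exact mul_nonneg hc0.le (Finset.sum_nonneg fun j _ =>
          mul_nonneg (hα0 j) (ih (y - x j)).1)
      · refine max_le ?_ ((le_max_right 0 (g y)).trans (hgh y))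
        have hA : avgOp d m α x (q k) y ≤ avgOp d m α x h y :=
          Finset.sum_le_sum fun j _ =>
            mul_le_mul_of_nonneg_left (ih (y - x j)).2 (hα0 j)
        have hh0 : 0 ≤ h y := (le_max_left 0 (g y)).trans (hgh y)
        calc c * avgOp d m α x (q k) y ≤ c * avgOp d m α x h y :=
              mul_le_mul_of_nonneg_left hA hc0.le
          _ = c * h y := by rw [hh y]
          _ ≤ 1 * h y := mul_le_mul_of_nonneg_right hc1.le hh0
          _ = h y := one_mul _
  intro n hn
  obtain ⟨p, rfl⟩ : ∃ p, n = p + 1 := ⟨n - 1, (Nat.succ_pred_eq_of_pos hn).symm⟩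
  simp only [Nat.add_sub_cancel]
  set S := ⨆ y, |q (p + 1) y - q p y| with hS
  have hbdd : BddAbove (Set.range fun y => |q (p + 1) y - q p y|) := by
    refine ⟨M, ?_⟩
    rintro _ ⟨y, rfl⟩
    have h1 := hbound (p + 1) y
    have h2 := hbound p y
    have h3 := hhM y
    rw [abs_sub_le_iff]
    constructor <;> linarith
  have hle : ∀ y, |q (p + 1) y - q p y| ≤ S := fun y => le_ciSup hbdd y
  have key : ∀ y, |q (p + 1 + 1) y - q (p + 1) y| ≤ c * S := by
    intro y
    have h1 : |bermOp d m α x c g (q (p+1)) y - bermOp d m α x c g (q p) y|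
        ≤ |c * avgOp d m α x (q (p+1)) y - c * avgOp d m α x (q p) y| :=
      abs_max_sub_max_le_abs _ _ _
    have h2 : |c * avgOp d m α x (q (p+1)) y - c * avgOp d m α x (q p) y|
        = c * |avgOp d m α x (q (p+1)) y - avgOp d m α x (q p) y| := by
      rw [← mul_sub, abs_mul, abs_of_pos hc0]
    have h3 : |avgOp d m α x (q (p+1)) y - avgOp d m α x (q p) y| ≤ S := by
      unfold avgOp
      rw [← Finset.sum_sub_distrib]
      calc |∑ k, (α k * q (p+1) (y - x k) - α k * q p (y - x k))|
          ≤ ∑ k, |α k * q (p+1) (y - x k) - α k * q p (y - x k)| :=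
            Finset.abs_sum_le_sum_abs _ _
        _ = ∑ k, α k * |q (p+1) (y - x k) - q p (y - x k)| := by
            refine Finset.sum_congr rfl fun k _ => ?_
            rw [← mul_sub, abs_mul, abs_of_nonneg (hα0 k)]
        _ ≤ ∑ k, α k * S :=
            Finset.sum_le_sum fun k _ =>
              mul_le_mul_of_nonneg_left (hle (y - x k)) (hα0 k)
        _ = S := by rw [← Finset.sum_mul, hsum, one_mul]
    calc |q (p + 1 + 1) y - q (p + 1) y|
        = |bermOp d m α x c g (q (p+1)) y - bermOp d m α x c g (q p) y| := by
          rw [hiter (p + 1), hiter p]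
      _ ≤ c * |avgOp d m α x (q (p+1)) y - avgOp d m α x (q p) y| := h2 ▸ h1
      _ ≤ c * S := mul_le_mul_of_nonneg_left h3 hc0.le
  exact ciSup_le key
end

section
/- (Linear convergence of the successive differences.) Assume in addition that h is bounded above by a constant M ≥ 0. Then for all n ∈ ℕ₀, sup_{y ∈ ℝ^d} |q_{n+1}(y) − q_n(y)| ≤ c^n · sup_{y ∈ ℝ^d} |q_1(y) − q_0(y)|, where q_n = D^n(max(g, 0)). -/
open Finset

/-- linear convergence of the successive differences:
`‖q_{n+1} - q_n‖_∞ ≤ c^n * ‖q_1 - q_0‖_∞`. -/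
theorem q_diff_linear_convergence (d m : ℕ) (hm : 1 ≤ m)
    (α : Fin m → ℝ) (hα : ∀ k, α k ∈ Set.Icc (0:ℝ) 1) (hsum : ∑ k, α k = 1)
    (x : Fin m → (Fin d → ℝ))
    (c : ℝ) (hc : c ∈ Set.Ioo (0:ℝ) 1)
    (g h : (Fin d → ℝ) → ℝ)
    (hg : ∀ y, g y ≤ avgOp d m α x g y)
    (hh : ∀ y, avgOp d m α x h y = h y)
    (hgh : ∀ y, max 0 (g y) ≤ h y)
    (M : ℝ) (hM : 0 ≤ M) (hhM : ∀ y, h y ≤ M)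
    (q : ℕ → (Fin d → ℝ) → ℝ)
    (hq : ∀ n, q n = (bermOp d m α x c g)^[n] (fun y => max (g y) 0)) :
    ∀ n : ℕ,
      (⨆ y, |q (n + 1) y - q n y|) ≤ c ^ n * ⨆ y, |q 1 y - q 0 y| := by
  obtain ⟨hc0, hc1⟩ := hc
  -- q (n+1) = D (q n)
  have hstep : ∀ n, q (n + 1) = bermOp d m α x c g (q n) := by
    intro n
    rw [hq, hq, Function.iterate_succ_apply']
  -- bounds 0 ≤ q n y ≤ M
  have hbound : ∀ n y, 0 ≤ q n y ∧ q n y ≤ M := by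
    intro n
    induction n with
    | zero =>
      intro y
      rw [hq]
      constructor
      · exact le_max_right _ _
      · simp only [Function.iterate_zero, id]
        calc max (g y) 0 = max 0 (g y) := max_comm _ _
          _ ≤ h y := hgh y
          _ ≤ M := hhM y
    | succ n ih =>
      intro y
      rw [hstep]
      have hA0 : 0 ≤ avgOp d m α x (q n) y := by
        apply Finset.sum_nonneg
        intro k _
        exact mul_nonneg (hα k).1 (ih _).1
      have hAM : avgOp d m α x (q n) y ≤ M := by
        calc avgOp d m α x (q n) y ≤ ∑ k, α k * M := by
              apply Finset.sum_le_sum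
              intro k _
              exact mul_le_mul_of_nonneg_left (ih _).2 (hα k).1
          _ = M := by rw [← Finset.sum_mul, hsum, one_mul]
      constructor
      · exact le_trans (mul_nonneg hc0.le hA0) (le_max_left _ _)
      · apply max_le
        · calc c * avgOp d m α x (q n) y ≤ 1 * avgOp d m α x (q n) y :=
              mul_le_mul_of_nonneg_right hc1.le hA0
            _ = avgOp d m α x (q n) y := one_mul _
            _ ≤ M := hAM
        · exact le_trans (le_trans (le_max_right 0 (g y)) (hgh y)) (hhM y)
  -- the sup S
  set S := ⨆ y, |q 1 y - q 0 y| with hS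
  have hbdd : BddAbove (Set.range fun y => |q 1 y - q 0 y|) := by
    refine ⟨M + M, ?_⟩
    rintro _ ⟨y, rfl⟩
    have h1 := hbound 1 y
    have h0 := hbound 0 y
    rw [abs_sub_le_iff]
    constructor <;> linarith
  have hpt1 : ∀ y, |q 1 y - q 0 y| ≤ S := fun y => le_ciSup hbdd y
  have hS0 : 0 ≤ S := le_trans (abs_nonneg _) (hpt1 0)
  -- pointwise induction
  have hpt : ∀ n y, |q (n + 1) y - q n y| ≤ c ^ n * S := by
    intro n
    induction n with
    | zero => intro y; simpa using hpt1 y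
    | succ n ih =>
      intro y
      have heq : |q (n + 1 + 1) y - q (n + 1) y| =
          |bermOp d m α x c g (q (n + 1)) y - bermOp d m α x c g (q n) y| := by
        rw [hstep (n + 1), hstep n]
      rw [heq]
      have : |bermOp d m α x c g (q (n + 1)) y - bermOp d m α x c g (q n) y|
          ≤ |c * avgOp d m α x (q (n + 1)) y - c * avgOp d m α x (q n) y| :=
        abs_max_sub_max_le_abs _ _ _
      refine this.trans ?_
      rw [← mul_sub, abs_mul, abs_of_pos hc0]
      have hA : |avgOp d m α x (q (n + 1)) y - avgOp d m α x (q n) y| ≤ c ^ n * S := by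
        unfold avgOp
        rw [← Finset.sum_sub_distrib]
        calc |∑ k, (α k * q (n + 1) (y - x k) - α k * q n (y - x k))|
            ≤ ∑ k, |α k * q (n + 1) (y - x k) - α k * q n (y - x k)| :=
              Finset.abs_sum_le_sum_abs _ _
          _ ≤ ∑ k, α k * (c ^ n * S) := by
              apply Finset.sum_le_sum
              intro k _
              rw [← mul_sub, abs_mul, abs_of_nonneg (hα k).1]
              exact mul_le_mul_of_nonneg_left (ih _) (hα k).1
          _ = c ^ n * S := by rw [← Finset.sum_mul, hsum, one_mul]
      calc c * |avgOp d m α x (q (n + 1)) y - avgOp d m α x (q n) y|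
          ≤ c * (c ^ n * S) := mul_le_mul_of_nonneg_left hA hc0.le
        _ = c ^ (n + 1) * S := by ring
  intro n
  exact Real.iSup_le (fun y => hpt n y)
    (mul_nonneg (pow_nonneg hc0.le n) hS0)
end

section
/- (Linear convergence to the limit price.) Assume in addition that h is bounded above by a constant M ≥ 0. Then the sequence q_n converges uniformly to q(y) := sup_{n ∈ ℕ₀} q_n(y) at a linear rate with factor c: for all n ∈ ℕ₀ and all y ∈ ℝ^d, 0 ≤ q(y) − q_n(y) ≤ (c^n / (1 − c)) · sup_{z ∈ ℝ^d} |q_1(z) − q_0(z)|, where q_n = D^n(max(g, 0)). -/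
open Finset

/-- linear convergence to the limit price:
`0 ≤ q(y) - q_n(y) ≤ (c^n / (1 - c)) * ‖q_1 - q_0‖_∞`. -/
theorem q_linear_convergence_to_limit (d m : ℕ) (hm : 1 ≤ m)
    (α : Fin m → ℝ) (hα : ∀ k, α k ∈ Set.Icc (0:ℝ) 1) (hsum : ∑ k, α k = 1)
    (x : Fin m → (Fin d → ℝ))
    (c : ℝ) (hc : c ∈ Set.Ioo (0:ℝ) 1)
    (g h : (Fin d → ℝ) → ℝ)
    (hg : ∀ y, g y ≤ avgOp d m α x g y)
    (hh : ∀ y, avgOp d m α x h y = h y)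
    (hgh : ∀ y, max 0 (g y) ≤ h y)
    (M : ℝ) (hM : 0 ≤ M) (hhM : ∀ y, h y ≤ M)
    (q : ℕ → (Fin d → ℝ) → ℝ)
    (hq : ∀ n, q n = (bermOp d m α x c g)^[n] (fun y => max (g y) 0))
    (qsup : (Fin d → ℝ) → ℝ) (hqsup : ∀ y, qsup y = ⨆ n : ℕ, q n y) :
    ∀ (n : ℕ) (y : Fin d → ℝ),
      0 ≤ qsup y - q n y ∧
        qsup y - q n y ≤ (c ^ n / (1 - c)) * ⨆ z, |q 1 z - q 0 z| := by
  obtain ⟨hc0, hc1⟩ := hc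
  have h1c : (0:ℝ) < 1 - c := by linarith
  have hα0 : ∀ k, 0 ≤ α k := fun k => (hα k).1
  have hAmono : ∀ f f' : (Fin d → ℝ) → ℝ, (∀ z, f z ≤ f' z) →
      ∀ y, avgOp d m α x f y ≤ avgOp d m α x f' y := by
    intro f f' hff y
    exact Finset.sum_le_sum fun k _ => mul_le_mul_of_nonneg_left (hff _) (hα0 k)
  have hq_succ : ∀ n y, q (n+1) y = bermOp d m α x c g (q n) y := by
    intro n y
    rw [hq, hq, Function.iterate_succ_apply']
  have hq0_def : ∀ y, q 0 y = max (g y) 0 := by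
    intro y; rw [hq]; simp
  -- monotone in n
  have hstep : ∀ n y, q n y ≤ q (n+1) y := by
    intro n
    induction n with
    | zero =>
      intro y
      rw [hq0_def, hq_succ 0 y]
      apply max_le
      · exact le_max_right _ _
      · apply le_trans _ (le_max_left _ _)
        apply mul_nonneg hc0.le
        apply Finset.sum_nonneg
        intro k _
        apply mul_nonneg (hα0 k)
        rw [hq0_def]
        exact le_max_right _ _
    | succ n ih =>
      intro y
      rw [hq_succ n y, hq_succ (n+1) y]
      exact max_le_max (mul_le_mul_of_nonneg_left (hAmono _ _ ih y) hc0.le) le_rfl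
  have hqmono : ∀ y, Monotone fun n => q n y := fun y =>
    monotone_nat_of_le_succ fun n => hstep n y
  have hqnn : ∀ n y, 0 ≤ q n y := by
    intro n y
    refine le_trans ?_ (hqmono y (Nat.zero_le n))
    show (0:ℝ) ≤ q 0 y
    rw [hq0_def]; exact le_max_right _ _
  have hghy : ∀ y, g y ≤ h y := fun y => le_trans (le_max_right 0 (g y)) (hgh y)
  have hh0 : ∀ y, 0 ≤ h y := fun y => le_trans (le_max_left 0 (g y)) (hgh y)
  have hqh : ∀ n y, q n y ≤ h y := by
    intro n
    induction n with
    | zero => intro y; rw [hq0_def, max_comm]; exact hgh y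
    | succ n ih =>
      intro y
      rw [hq_succ n y]
      apply max_le _ (hghy y)
      calc c * avgOp d m α x (q n) y ≤ c * avgOp d m α x h y :=
            mul_le_mul_of_nonneg_left (hAmono _ _ ih y) hc0.le
        _ = c * h y := by rw [hh y]
        _ ≤ 1 * h y := mul_le_mul_of_nonneg_right hc1.le (hh0 y)
        _ = h y := one_mul _
  have hqM : ∀ n y, q n y ≤ M := fun n y => le_trans (hqh n y) (hhM y)
  have hbddS : BddAbove (Set.range fun z => |q 1 z - q 0 z|) := by
    refine ⟨M, ?_⟩
    rintro r ⟨z, rfl⟩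
    show |q 1 z - q 0 z| ≤ M
    rw [abs_of_nonneg (sub_nonneg.mpr (hstep 0 z))]
    have := hqM 1 z
    have := hqnn 0 z
    linarith
  set S := ⨆ z : Fin d → ℝ, |q 1 z - q 0 z| with hS
  have hS0 : 0 ≤ S := le_trans (abs_nonneg _) (le_ciSup hbddS (0 : Fin d → ℝ))
  -- key contraction estimate
  have key : ∀ n z, q (n+1) z - q n z ≤ c ^ n * S := by
    intro n
    induction n with
    | zero =>
      intro z
      rw [pow_zero, one_mul]
      exact le_trans (le_abs_self _) (le_ciSup hbddS z)
    | succ n ih =>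
      intro z
      have hAdiff : avgOp d m α x (q (n+1)) z - avgOp d m α x (q n) z ≤ c ^ n * S := by
        unfold avgOp
        rw [← Finset.sum_sub_distrib]
        calc (∑ k, (α k * q (n+1) (z - x k) - α k * q n (z - x k)))
            = ∑ k, α k * (q (n+1) (z - x k) - q n (z - x k)) := by
              apply Finset.sum_congr rfl; intro k _; ring
          _ ≤ ∑ k, α k * (c ^ n * S) := by
              apply Finset.sum_le_sum
              intro k _
              exact mul_le_mul_of_nonneg_left (ih _) (hα0 k)
          _ = c ^ n * S := by rw [← Finset.sum_mul, hsum, one_mul]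
      rw [hq_succ (n+1) z, hq_succ n z]
      have habs : |bermOp d m α x c g (q (n+1)) z - bermOp d m α x c g (q n) z| ≤
          c * (c ^ n * S) := by
        unfold bermOp
        refine le_trans (abs_max_sub_max_le_max _ _ _ _) ?_
        rw [sub_self, abs_zero]
        apply max_le _ (by positivity)
        rw [← mul_sub, abs_mul, abs_of_pos hc0]
        apply mul_le_mul_of_nonneg_left _ hc0.le
        rw [abs_of_nonneg (sub_nonneg.mpr (hAmono _ _ (hstep n) z))]
        exact hAdiff
      calc bermOp d m α x c g (q (n+1)) z - bermOp d m α x c g (q n) z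
          ≤ |bermOp d m α x c g (q (n+1)) z - bermOp d m α x c g (q n) z| := le_abs_self _
        _ ≤ c * (c ^ n * S) := habs
        _ = c ^ (n+1) * S := by ring
  -- telescoping
  have chain : ∀ n k y, q (n + k) y ≤ q n y + (∑ i ∈ Finset.range k, c ^ (n + i)) * S := by
    intro n k y
    induction k with
    | zero => simp
    | succ k ih =>
      have := key (n + k) y
      rw [Finset.sum_range_succ, add_mul]
      have : q (n + (k+1)) y ≤ q (n + k) y + c ^ (n + k) * S := by
        have h2 := key (n + k) y
        have : n + (k+1) = (n + k) + 1 := by ring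
        rw [this]; linarith
      linarith
  have hgeom : ∀ k : ℕ, (∑ i ∈ Finset.range k, c ^ i) ≤ 1 / (1 - c) := by
    intro k
    rw [le_div_iff₀ h1c]
    have hgm := geom_sum_mul c k
    have hck : 0 ≤ c ^ k := pow_nonneg hc0.le k
    nlinarith [hgm]
  have hbound : ∀ n N y, q N y ≤ q n y + c ^ n / (1 - c) * S := by
    intro n N y
    rcases le_or_gt N n with hNn | hNn
    · have : 0 ≤ c ^ n / (1 - c) * S := by positivity
      have := hqmono y hNn
      linarith
    · obtain ⟨k, rfl⟩ := Nat.exists_eq_add_of_le hNn.le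
      refine le_trans (chain n k y) ?_
      have hsum' : (∑ i ∈ Finset.range k, c ^ (n + i)) = c ^ n * ∑ i ∈ Finset.range k, c ^ i := by
        rw [Finset.mul_sum]
        exact Finset.sum_congr rfl fun i _ => by rw [pow_add]
      rw [hsum']
      have : c ^ n * (∑ i ∈ Finset.range k, c ^ i) ≤ c ^ n * (1 / (1 - c)) :=
        mul_le_mul_of_nonneg_left (hgeom k) (pow_nonneg hc0.le n)
      have heq : c ^ n * (1 / (1 - c)) = c ^ n / (1 - c) := by ring
      nlinarith [hS0]
  intro n y
  have hbddQ : BddAbove (Set.range fun N => q N y) := by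
    refine ⟨M, ?_⟩
    rintro r ⟨N, rfl⟩
    exact hqM N y
  constructor
  · rw [hqsup y, sub_nonneg]
    exact le_ciSup hbddQ n
  · rw [hqsup y, sub_le_iff_le_add]
    apply ciSup_le
    intro N
    have := hbound n N y
    linarith
end

section
/- The operator D commutes with pointwise suprema of bounded monotone increasing sequences of functions: if (f_n)_{n ∈ ℕ₀} is a sequence of functions ℝ^d → ℝ with f_n ≤ f_{n+1} pointwise for all n and such that for every y ∈ ℝ^d the set {f_n(y) : n ∈ ℕ₀} is bounded above, then D(y ↦ sup_n f_n(y)) = y ↦ sup_n (D f_n)(y). -/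
open Finset

/-- `D` commutes with pointwise suprema of bounded monotonely
increasing sequences of functions. -/
theorem bermOp_iSup_comm (d m : ℕ) (hm : 1 ≤ m)
    (α : Fin m → ℝ) (hα : ∀ k, α k ∈ Set.Icc (0:ℝ) 1) (hsum : ∑ k, α k = 1)
    (x : Fin m → (Fin d → ℝ))
    (c : ℝ) (hc : c ∈ Set.Ioo (0:ℝ) 1)
    (g : (Fin d → ℝ) → ℝ)
    (f : ℕ → (Fin d → ℝ) → ℝ)
    (hmono : ∀ n : ℕ, ∀ y, f n y ≤ f (n + 1) y)
    (hbdd : ∀ y, BddAbove (Set.range fun n : ℕ => f n y)) :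
    bermOp d m α x c g (fun y => ⨆ n : ℕ, f n y) =
      fun y => ⨆ n : ℕ, bermOp d m α x c g (f n) y := by
  funext y
  have hmono' : ∀ z, Monotone fun n : ℕ => f n z := fun z =>
    monotone_nat_of_le_succ fun n => hmono n z
  have hk : ∀ k : Fin m, Filter.Tendsto (fun n : ℕ => f n (y - x k)) Filter.atTop
      (nhds (⨆ n : ℕ, f n (y - x k))) := fun k =>
    tendsto_atTop_ciSup (hmono' _) (hbdd _)
  have hsumT : Filter.Tendsto (fun n : ℕ => ∑ k, α k * f n (y - x k)) Filter.atTop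
      (nhds (∑ k, α k * ⨆ n : ℕ, f n (y - x k))) :=
    tendsto_finset_sum _ fun k _ => (hk k).const_mul _
  have hT : Filter.Tendsto (fun n : ℕ => bermOp d m α x c g (f n) y) Filter.atTop
      (nhds (bermOp d m α x c g (fun z => ⨆ n : ℕ, f n z) y)) := by
    simpa [bermOp, avgOp] using (hsumT.const_mul c).max tendsto_const_nhds
  have hmonoB : Monotone fun n : ℕ => bermOp d m α x c g (f n) y := by
    apply monotone_nat_of_le_succ
    intro n
    apply max_le_max _ le_rfl
    apply mul_le_mul_of_nonneg_left _ hc.1.le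
    exact Finset.sum_le_sum fun k _ =>
      mul_le_mul_of_nonneg_left (hmono n _) (hα k).1
  exact ((isLUB_of_tendsto_atTop hmonoB hT).ciSup_eq).symm
end
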